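/- Assume the HPPK DS setup: p ≥ 2, λ, n, m natural numbers with m ≥ 1; f₀,…,f_λ, h₀,…,h_λ and B_{t,j} (0 ≤ t ≤ n, 1 ≤ j ≤ m) natural numbers all less than p; p_{ij} = (∑_{s+t=i} f_s·B_{t,j}) mod p and q_{ij} = (∑_{s+t=i} h_s·B_{t,j}) mod p; S₁, S₂ ≥ p² with R₁ coprime to S₁, R₂ coprime to S₂ and inverses R₁', R₂'; P_{ij} = (R₁·p_{ij}) mod S₁, Q_{ij} = (R₂·q_{ij}) mod S₂; x₀ < p, α < p; F = (R₂'·((α·∑_s f_s x₀^s) mod p)) mod S₂ and H = (R₁'·((α·∑_s h_s x₀^s) mod p)) mod S₁. Let R be a positive integer with R ≥ S₁ and R ≥ S₂, and define the Barrett public-key elements μ_{ij} = ⌊R·P_{ij}/S₁⌋ and ν_{ij} = ⌊R·Q_{ij}/S₂⌋, together with s₁ = S₁ mod p, s₂ = S₂ mod p, p'_{ij} = P_{ij} mod p, q'_{ij} = Q_{ij} mod p. If for all i, j the floor equalities ⌊H·μ_{ij}/R⌋ = ⌊H·P_{ij}/S₁⌋ and ⌊F·ν_{ij}/R⌋ =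 ⌊F·Q_{ij}/S₂⌋ hold, then for all natural numbers u₁, …, u_m: ∑_{j=1}^{m} ∑_{i=0}^{n+λ} (F·q'_{ij} − s₂·⌊F·ν_{ij}/R⌋)·x₀^i·u_j ≡ ∑_{j=1}^{m} ∑_{i=0}^{n+λ} (H·p'_{ij} − s₁·⌊H·μ_{ij}/R⌋)·x₀^i·u_j (mod p), where the coefficient expressions are computed in the integers. -/
import Mathlib

lemma hppk_key_mod (S Rr Rr' A q : ℕ) (hlt : A * q < S)
    (hi : Rr' * Rr ≡ 1 [MOD S]) :
    ((Rr' * A) % S) * ((Rr * q) % S) % S = A * q := by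
  have h1 : ((Rr' * A) % S) * ((Rr * q) % S) ≡ (Rr' * Rr) * (A * q) [MOD S] := by
    calc ((Rr' * A) % S) * ((Rr * q) % S)
        ≡ (Rr' * A) * (Rr * q) [MOD S] := (Nat.mod_modEq _ S).mul (Nat.mod_modEq _ S)
      _ = (Rr' * Rr) * (A * q) := by ring
  have h2 : ((Rr' * A) % S) * ((Rr * q) % S) ≡ 1 * (A * q) [MOD S] :=
    h1.trans (hi.mul_right _)
  have h3 : ((Rr' * A) % S) * ((Rr * q) % S) % S = (1 * (A * q)) % S := h2
  rw [h3, one_mul, Nat.mod_eq_of_lt hlt]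

lemma hppk_poly_sum (p lam n : ℕ) (c : Fin (lam + 1) → ℕ) (b : Fin (n + 1) → ℕ)
    (x : ℕ) :
    (∑ i ∈ Finset.range (n + lam + 1),
      (((∑ s : Fin (lam + 1), ∑ t : Fin (n + 1),
        if (s : ℕ) + (t : ℕ) = i then c s * b t else 0) % p : ℕ) : ZMod p) * (x : ZMod p) ^ i)
    = (∑ s : Fin (lam + 1), (c s : ZMod p) * (x : ZMod p) ^ (s : ℕ)) *
      (∑ t : Fin (n + 1), (b t : ZMod p) * (x : ZMod p) ^ (t : ℕ)) := by
  have hcast : ∀ i : ℕ,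
      (((∑ s : Fin (lam + 1), ∑ t : Fin (n + 1),
        if (s : ℕ) + (t : ℕ) = i then c s * b t else 0) % p : ℕ) : ZMod p)
      = ∑ s : Fin (lam + 1), ∑ t : Fin (n + 1),
        if (s : ℕ) + (t : ℕ) = i then (c s : ZMod p) * (b t : ZMod p) else 0 := by
    intro i
    push_cast [ZMod.natCast_mod, apply_ite (Nat.cast : ℕ → ZMod p)]
    rfl
  simp_rw [hcast, Finset.sum_mul, ite_mul, zero_mul]
  rw [Finset.sum_comm]
  have step : (∑ s : Fin (lam + 1),
      ∑ i ∈ Finset.range (n + lam + 1),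
        ∑ t : Fin (n + 1), if (s : ℕ) + (t : ℕ) = i then (c s : ZMod p) * (b t : ZMod p) * (x : ZMod p) ^ i else 0)
      = ∑ s : Fin (lam + 1), ∑ t : Fin (n + 1),
          (c s : ZMod p) * (b t : ZMod p) * (x : ZMod p) ^ ((s : ℕ) + (t : ℕ)) := by
    refine Finset.sum_congr rfl fun s _ => ?_
    rw [Finset.sum_comm]
    refine Finset.sum_congr rfl fun t _ => ?_
    have hmem : (s : ℕ) + (t : ℕ) ∈ Finset.range (n + lam + 1) := by
      have hs := s.is_lt
      have ht := t.is_lt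
      simp only [Finset.mem_range]
      omega
    rw [Finset.sum_ite_eq]
    simp [hmem]
  rw [step]
  simp_rw [Finset.mul_sum]
  refine Finset.sum_congr rfl fun s _ => Finset.sum_congr rfl fun t _ => ?_
  rw [pow_add]
  ring

/-- HPPK DS Barrett-based verification correctness: under the HPPK DS setup, if the
Barrett approximate quotients `⌊H·μ_{ij}/R⌋` and `⌊F·ν_{ij}/R⌋` coincide with the true
quotients `⌊H·P_{ij}/S₁⌋` and `⌊F·Q_{ij}/S₂⌋`, then the Barrett-form verification
equation holds modulo `p`, with the coefficient expressions computed in `ℤ`. -/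
theorem stmt_12 (p lam n m : ℕ) (hp : 2 ≤ p) (hm : 1 ≤ m)
    (fc hc : Fin (lam + 1) → ℕ) (Bc : Fin (n + 1) → Fin m → ℕ)
    (hfc : ∀ s, fc s < p) (hhc : ∀ s, hc s < p) (hBc : ∀ t j, Bc t j < p)
    (S₁ S₂ R₁ R₂ R₁' R₂' : ℕ)
    (hS₁ : p ^ 2 ≤ S₁) (hS₂ : p ^ 2 ≤ S₂) (hS₁pos : 0 < S₁) (hS₂pos : 0 < S₂)
    (hg₁ : Nat.gcd R₁ S₁ = 1) (hg₂ : Nat.gcd R₂ S₂ = 1)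
    (hi₁ : R₁' * R₁ ≡ 1 [MOD S₁]) (hi₂ : R₂' * R₂ ≡ 1 [MOD S₂])
    (x₀ α : ℕ) (hx₀ : x₀ < p) (hα : α < p)
    (R : ℕ) (hRpos : 0 < R) (hRS₁ : S₁ ≤ R) (hRS₂ : S₂ ≤ R) :
    let pij : ℕ → Fin m → ℕ := fun i j =>
      (∑ s : Fin (lam + 1), ∑ t : Fin (n + 1),
        if (s : ℕ) + (t : ℕ) = i then fc s * Bc t j else 0) % p
    let qij : ℕ → Fin m → ℕ := fun i j =>
      (∑ s : Fin (lam + 1), ∑ t : Fin (n + 1),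
        if (s : ℕ) + (t : ℕ) = i then hc s * Bc t j else 0) % p
    let Pij : ℕ → Fin m → ℕ := fun i j => (R₁ * pij i j) % S₁
    let Qij : ℕ → Fin m → ℕ := fun i j => (R₂ * qij i j) % S₂
    let F := (R₂' * ((α * ∑ s : Fin (lam + 1), fc s * x₀ ^ (s : ℕ)) % p)) % S₂
    let H := (R₁' * ((α * ∑ s : Fin (lam + 1), hc s * x₀ ^ (s : ℕ)) % p)) % S₁
    let μij : ℕ → Fin m → ℕ := fun i j => R * Pij i j / S₁
    let νij : ℕ → Fin m → ℕ := fun i j => R * Qij i j / S₂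
    let s₁ := S₁ % p
    let s₂ := S₂ % p
    let p'ij : ℕ → Fin m → ℕ := fun i j => Pij i j % p
    let q'ij : ℕ → Fin m → ℕ := fun i j => Qij i j % p
    (∀ i < n + lam + 1, ∀ j : Fin m,
        H * μij i j / R = H * Pij i j / S₁ ∧ F * νij i j / R = F * Qij i j / S₂) →
    ∀ u : Fin m → ℕ,
      (∑ j, ∑ i ∈ Finset.range (n + lam + 1),
          ((F : ℤ) * (q'ij i j : ℤ) - (s₂ : ℤ) * ((F * νij i j / R : ℕ) : ℤ)) *
            (x₀ : ℤ) ^ i * (u j : ℤ)) ≡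
        (∑ j, ∑ i ∈ Finset.range (n + lam + 1),
          ((H : ℤ) * (p'ij i j : ℤ) - (s₁ : ℤ) * ((H * μij i j / R : ℕ) : ℤ)) *
            (x₀ : ℤ) ^ i * (u j : ℤ)) [ZMOD (p : ℤ)] := by
  intro pij qij Pij Qij F H μij νij s₁ s₂ p'ij q'ij hfloor u
  have hp0 : 0 < p := by omega
  set Af := (α * ∑ s : Fin (lam + 1), fc s * x₀ ^ (s : ℕ)) % p with hAfdef
  set Ah := (α * ∑ s : Fin (lam + 1), hc s * x₀ ^ (s : ℕ)) % p with hAhdef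
  have hAf : Af < p := Nat.mod_lt _ hp0
  have hAh : Ah < p := Nat.mod_lt _ hp0
  have hFQ : ∀ i (j : Fin m), F * Qij i j % S₂ = Af * qij i j := by
    intro i j
    have hlt : Af * qij i j < S₂ := by
      have h1 : qij i j < p := Nat.mod_lt _ hp0
      have : Af * qij i j < p * p := Nat.mul_lt_mul'' hAf h1
      calc Af * qij i j < p * p := this
        _ = p ^ 2 := by ring
        _ ≤ S₂ := hS₂
    exact hppk_key_mod S₂ R₂ R₂' Af (qij i j) hlt hi₂
  have hHP : ∀ i (j : Fin m), H * Pij i j % S₁ = Ah * pij i j := by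
    intro i j
    have hlt : Ah * pij i j < S₁ := by
      have h1 : pij i j < p := Nat.mod_lt _ hp0
      have : Ah * pij i j < p * p := Nat.mul_lt_mul'' hAh h1
      calc Ah * pij i j < p * p := this
        _ = p ^ 2 := by ring
        _ ≤ S₁ := hS₁
    exact hppk_key_mod S₁ R₁ R₁' Ah (pij i j) hlt hi₁
  rw [← ZMod.intCast_eq_intCast_iff]
  simp only [Int.cast_sum, Int.cast_mul, Int.cast_sub, Int.cast_pow, Int.cast_natCast]
  refine Finset.sum_congr rfl fun j _ => ?_
  -- reduce each side's coefficients
  have hLcoef : ∀ i ∈ Finset.range (n + lam + 1),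
      ((F : ZMod p) * ((q'ij i j : ℕ) : ZMod p) - ((s₂ : ℕ) : ZMod p) * ((F * νij i j / R : ℕ) : ZMod p))
        * ((x₀ : ZMod p)) ^ i * ((u j : ℕ) : ZMod p)
      = ((Af * qij i j : ℕ) : ZMod p) * (x₀ : ZMod p) ^ i * (u j : ZMod p) := by
    intro i hi
    rw [Finset.mem_range] at hi
    rw [(hfloor i hi j).2]
    have hdm := Nat.div_add_mod (F * Qij i j) S₂
    rw [hFQ i j] at hdm
    have hcast : ((S₂ * (F * Qij i j / S₂) + Af * qij i j : ℕ) : ZMod p)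
        = ((F * Qij i j : ℕ) : ZMod p) := by rw [hdm]
    push_cast at hcast ⊢
    have hq' : ((q'ij i j : ℕ) : ZMod p) = ((Qij i j : ℕ) : ZMod p) := by
      show (((Qij i j) % p : ℕ) : ZMod p) = _
      rw [ZMod.natCast_mod]
    have hs₂ : ((s₂ : ℕ) : ZMod p) = ((S₂ : ℕ) : ZMod p) := by
      show ((S₂ % p : ℕ) : ZMod p) = _
      rw [ZMod.natCast_mod]
    rw [hq', hs₂]
    linear_combination (-((x₀ : ZMod p)) ^ i * ((u j : ℕ) : ZMod p)) * hcast
  have hRcoef : ∀ i ∈ Finset.range (n + lam + 1),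
      ((H : ZMod p) * ((p'ij i j : ℕ) : ZMod p) - ((s₁ : ℕ) : ZMod p) * ((H * μij i j / R : ℕ) : ZMod p))
        * ((x₀ : ZMod p)) ^ i * ((u j : ℕ) : ZMod p)
      = ((Ah * pij i j : ℕ) : ZMod p) * (x₀ : ZMod p) ^ i * (u j : ZMod p) := by
    intro i hi
    rw [Finset.mem_range] at hi
    rw [(hfloor i hi j).1]
    have hdm := Nat.div_add_mod (H * Pij i j) S₁
    rw [hHP i j] at hdm
    have hcast : ((S₁ * (H * Pij i j / S₁) + Ah * pij i j : ℕ) : ZMod p)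
        = ((H * Pij i j : ℕ) : ZMod p) := by rw [hdm]
    push_cast at hcast ⊢
    have hq' : ((p'ij i j : ℕ) : ZMod p) = ((Pij i j : ℕ) : ZMod p) := by
      show (((Pij i j) % p : ℕ) : ZMod p) = _
      rw [ZMod.natCast_mod]
    have hs₁ : ((s₁ : ℕ) : ZMod p) = ((S₁ : ℕ) : ZMod p) := by
      show ((S₁ % p : ℕ) : ZMod p) = _
      rw [ZMod.natCast_mod]
    rw [hq', hs₁]
    linear_combination (-((x₀ : ZMod p)) ^ i * ((u j : ℕ) : ZMod p)) * hcast
  rw [Finset.sum_congr rfl hLcoef, Finset.sum_congr rfl hRcoef]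
  have hAfc : ((Af : ℕ) : ZMod p)
      = (α : ZMod p) * ∑ s : Fin (lam + 1), (fc s : ZMod p) * (x₀ : ZMod p) ^ (s : ℕ) := by
    rw [hAfdef, ZMod.natCast_mod]
    push_cast
    ring
  have hAhc : ((Ah : ℕ) : ZMod p)
      = (α : ZMod p) * ∑ s : Fin (lam + 1), (hc s : ZMod p) * (x₀ : ZMod p) ^ (s : ℕ) := by
    rw [hAhdef, ZMod.natCast_mod]
    push_cast
    ring
  have hL : ∑ i ∈ Finset.range (n + lam + 1),
        ((Af * qij i j : ℕ) : ZMod p) * (x₀ : ZMod p) ^ i * ((u j : ℕ) : ZMod p)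
      = ((Af : ℕ) : ZMod p) * ((u j : ℕ) : ZMod p) *
        ((∑ s : Fin (lam + 1), (hc s : ZMod p) * (x₀ : ZMod p) ^ (s : ℕ)) *
         (∑ t : Fin (n + 1), (Bc t j : ZMod p) * (x₀ : ZMod p) ^ (t : ℕ))) := by
    rw [← hppk_poly_sum p lam n hc (fun t => Bc t j) x₀, Finset.mul_sum]
    refine Finset.sum_congr rfl fun i _ => ?_
    push_cast
    ring
  have hR : ∑ i ∈ Finset.range (n + lam + 1),
        ((Ah * pij i j : ℕ) : ZMod p) * (x₀ : ZMod p) ^ i * ((u j : ℕ) : ZMod p)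
      = ((Ah : ℕ) : ZMod p) * ((u j : ℕ) : ZMod p) *
        ((∑ s : Fin (lam + 1), (fc s : ZMod p) * (x₀ : ZMod p) ^ (s : ℕ)) *
         (∑ t : Fin (n + 1), (Bc t j : ZMod p) * (x₀ : ZMod p) ^ (t : ℕ))) := by
    rw [← hppk_poly_sum p lam n fc (fun t => Bc t j) x₀, Finset.mul_sum]
    refine Finset.sum_congr rfl fun i _ => ?_
    push_cast
    ring
  rw [hL, hR, hAfc, hAhc]
  ring
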